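/- For any integer α ≥ 2, the generalized Bethe tree B(α² − α + 1, α) with three levels has exactly two main eigenvalues. -/

import Mathlib

open Matrix Finset

/-- `G` is a generalized Bethe tree `B(d₁, …, d_{k-1})` with `k` levels and root `r`:
it is a tree, each `dᵢ ≥ 2`, every vertex at distance `i - 1` from `r` has degree `dᵢ`
(for `1 ≤ i ≤ k - 1`), every vertex at distance `k - 1` from `r` has degree `1`, and
every vertex is at distance at most `k - 1` from `r`. -/
def IsGenBetheTree {V : Type*} (G : SimpleGraph V) (r : V) (k : ℕ) (d : ℕ → ℕ) : Prop :=
  G.IsTree ∧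
  (∀ i, 1 ≤ i → i ≤ k - 1 → 2 ≤ d i) ∧
  (∀ i, 1 ≤ i → i ≤ k - 1 → ∀ v, G.dist r v = i - 1 → (G.neighborSet v).ncard = d i) ∧
  (∀ v : V, G.dist r v = k - 1 → (G.neighborSet v).ncard = 1) ∧
  (∀ v : V, G.dist r v ≤ k - 1)

open scoped Classical in
/-- The adjacency matrix of `G` over `ℝ`. -/
noncomputable def adjMat {V : Type*} [Fintype V] (G : SimpleGraph V) : Matrix V V ℝ :=
  Matrix.of fun v w => if G.Adj v w then (1 : ℝ) else 0

/-- The set of main eigenvalues of `G`: those `λ` admitting a real eigenvector of the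
adjacency matrix whose entry sum is nonzero. -/
noncomputable def mainSpectrum {V : Type*} [Fintype V] (G : SimpleGraph V) : Set ℝ :=
  {lam : ℝ | ∃ x : V → ℝ, (adjMat G).mulVec x = lam • x ∧ ∑ v, x v ≠ 0}

lemma no_triangle {V : Type*} {G : SimpleGraph V} (hA : G.IsAcyclic) {a b c : V}
    (hab : G.Adj a b) (hbc : G.Adj b c) (hca : G.Adj c a) : False := by
  have hp : (SimpleGraph.Walk.cons hab (SimpleGraph.Walk.cons hbc SimpleGraph.Walk.nil)).IsPath := by
    simp [SimpleGraph.Walk.isPath_def, hab.ne, hbc.ne, (hca.symm.ne : a ≠ c)]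
  have h := hA.path_unique (SimpleGraph.Path.singleton hca.symm) ⟨_, hp⟩
  have hl := congrArg (fun p : G.Path a c => p.1.length) h
  simp [SimpleGraph.Path.singleton] at hl

lemma deg_sum_eq {V : Type*} [Fintype V] (G : SimpleGraph V) [DecidableRel G.Adj] (r : V)
    (α : ℕ) (hα : 2 ≤ α)
    (hT : IsGenBetheTree G r 3 (fun i => if i = 1 then α ^ 2 - α + 1 else α)) (v : V) :
    ∑ u ∈ G.neighborFinset v, G.degree u = α * G.degree v := by
  have : DecidableEq V := Classical.decEq V
  obtain ⟨htree, -, hdeg, hleaf, hdist⟩ := hT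
  have hconn := htree.isConnected
  have hac := htree.IsAcyclic
  have hcard : ∀ w : V, (G.neighborSet w).ncard = G.degree w := by
    intro w
    rw [Set.ncard_eq_toFinset_card', Set.toFinset_card,
      SimpleGraph.card_neighborSet_eq_degree]
  have hdr : G.degree r = α ^ 2 - α + 1 := by
    have := hdeg 1 le_rfl (by norm_num) r (by simp [SimpleGraph.dist_self])
    rw [hcard] at this; simpa using this
  have h1 : ∀ w, G.dist r w = 1 → G.degree w = α := by
    intro w hw
    have := hdeg 2 (by norm_num) (by norm_num) w (by simpa using hw)
    rw [hcard] at this; simpa using this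
  have h2 : ∀ w, G.dist r w = 2 → G.degree w = 1 := by
    intro w hw
    have := hleaf w (by simpa using hw)
    rw [hcard] at this; simpa using this
  have hle : ∀ w, G.dist r w ≤ 2 := by intro w; simpa using hdist w
  have hαsq : α ≤ α ^ 2 := Nat.le_self_pow (by norm_num) α
  have hdv := hle v
  interval_cases hv : (G.dist r v)
  · -- v = r
    have hvr : v = r := (hconn.dist_eq_zero_iff.mp hv).symm
    subst hvr
    have : ∀ u ∈ G.neighborFinset v, G.degree u = α := by
      intro u hu
      exact h1 u (SimpleGraph.dist_eq_one_iff_adj.mpr ((SimpleGraph.mem_neighborFinset _ _ _).mp hu))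
    rw [Finset.sum_congr rfl this, Finset.sum_const, smul_eq_mul]
    rw [SimpleGraph.degree]
    ring
  · -- dist 1
    have hadj : G.Adj r v := SimpleGraph.dist_eq_one_iff_adj.mp hv
    have hdegv : G.degree v = α := h1 v hv
    have hrmem : r ∈ G.neighborFinset v := (SimpleGraph.mem_neighborFinset _ _ _).mpr hadj.symm
    have hothers : ∀ u ∈ (G.neighborFinset v).erase r, G.degree u = 1 := by
      intro u hu
      obtain ⟨hur, humem⟩ := Finset.mem_erase.mp hu
      have hvu : G.Adj v u := (SimpleGraph.mem_neighborFinset _ _ _).mp humem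
      have hne0 : G.dist r u ≠ 0 := fun h0 => hur (hconn.dist_eq_zero_iff.mp h0).symm
      have hne1 : G.dist r u ≠ 1 := by
        intro h1'
        exact no_triangle hac hadj hvu (SimpleGraph.dist_eq_one_iff_adj.mp h1').symm
      have : G.dist r u = 2 := by have := hle u; omega
      exact h2 u this
    rw [← Finset.sum_erase_add _ _ hrmem, Finset.sum_congr rfl hothers, Finset.sum_const,
      smul_eq_mul, Finset.card_erase_of_mem hrmem, hdr, hdegv, ← SimpleGraph.degree, hdegv]
    have hsq : α ^ 2 = α * α := sq α
    omega
  · -- dist 2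
    have hdegv : G.degree v = 1 := h2 v hv
    obtain ⟨p, hp⟩ := hconn.exists_walk_length_eq_dist r v
    rw [hv] at hp
    cases p with
    | nil => simp at hp
    | cons hrb q =>
      rename_i b
      cases q with
      | nil => simp at hp
      | cons hbc q2 =>
        rename_i c
        have hq2 : q2.length = 0 := by simp only [SimpleGraph.Walk.length_cons] at hp; omega
        have hcv : v = c := (SimpleGraph.Walk.eq_of_length_eq_zero hq2).symm
        subst hcv
        have hbmem : b ∈ G.neighborFinset v := (SimpleGraph.mem_neighborFinset _ _ _).mpr hbc.symm
        have hcard1 : (G.neighborFinset v).card = 1 := hdegv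
        obtain ⟨a, ha⟩ := Finset.card_eq_one.mp hcard1
        have hab : b = a := by rw [ha] at hbmem; simpa using hbmem
        subst hab
        rw [ha, Finset.sum_singleton, hdegv, mul_one]
        exact h1 b (SimpleGraph.dist_eq_one_iff_adj.mpr hrb)

lemma adjMat_mulVec {V : Type*} [Fintype V] (G : SimpleGraph V) [DecidableRel G.Adj]
    (x : V → ℝ) (v : V) :
    (adjMat G).mulVec x v = ∑ u ∈ G.neighborFinset v, x u := by
  rw [SimpleGraph.neighborFinset_eq_filter, Finset.sum_filter]
  simp [adjMat, Matrix.mulVec, dotProduct, ite_mul]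

lemma adjMat_symm_dot {V : Type*} [Fintype V] (G : SimpleGraph V)
    (x y : V → ℝ) : (adjMat G).mulVec x ⬝ᵥ y = x ⬝ᵥ (adjMat G).mulVec y := by
  have hA : (adjMat G)ᵀ = adjMat G := by
    ext a b
    simp only [adjMat, Matrix.transpose_apply, Matrix.of_apply]
    rw [SimpleGraph.adj_comm]
  calc (adjMat G).mulVec x ⬝ᵥ y = (adjMat G)ᵀ.mulVec x ⬝ᵥ y := by rw [hA]
    _ = x ᵥ* (adjMat G) ⬝ᵥ y := by rw [Matrix.mulVec_transpose]
    _ = x ⬝ᵥ (adjMat G).mulVec y := (Matrix.dotProduct_mulVec x _ y).symm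

/-- For any integer `α ≥ 2`, the generalized Bethe tree
`B(α² - α + 1, α)` with three levels has exactly two main eigenvalues. -/
theorem threeLevel_two_main_eigenvalues {V : Type*} [Fintype V] (G : SimpleGraph V)
    (r : V) (α : ℕ) (hα : 2 ≤ α)
    (hT : IsGenBetheTree G r 3 (fun i => if i = 1 then α ^ 2 - α + 1 else α)) :
    (mainSpectrum G).Finite ∧ (mainSpectrum G).ncard = 2 := by
  classical
  have htree := hT.1
  set f : V → ℝ := fun v => (G.degree v : ℝ) with hf
  have hA1 : (adjMat G).mulVec (fun _ => (1:ℝ)) = f := by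
    funext v
    rw [adjMat_mulVec, hf]
    rw [Finset.sum_const, nsmul_eq_mul, mul_one]
    rfl
  have hAf : (adjMat G).mulVec f = (α : ℝ) • f := by
    funext v
    rw [adjMat_mulVec]
    have h := deg_sum_eq G r α hα hT v
    have h2 : (∑ u ∈ G.neighborFinset v, (G.degree u : ℝ)) = (α : ℝ) * G.degree v := by
      exact_mod_cast congrArg (Nat.cast : ℕ → ℝ) h
    simpa [hf] using h2
  -- card V ≥ 2
  have hn2 : 2 ≤ Fintype.card V := by
    have hdr0 : G.degree r = α ^ 2 - α + 1 := by
      have hd := hT.2.2.1 1 le_rfl (by norm_num) r (by simp [SimpleGraph.dist_self])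
      rw [Set.ncard_eq_toFinset_card', Set.toFinset_card,
        SimpleGraph.card_neighborSet_eq_degree] at hd
      simpa using hd
    have hdr : 0 < G.degree r := by rw [hdr0]; omega
    obtain ⟨u, hu⟩ := (SimpleGraph.degree_pos_iff_exists_adj G r).mp hdr
    exact Fintype.one_lt_card_iff.mpr ⟨u, r, hu.ne'⟩
  have hcR : (2:ℝ) ≤ (Fintype.card V : ℝ) := by exact_mod_cast hn2
  have hαR : (2:ℝ) ≤ (α : ℝ) := by exact_mod_cast hα
  have hE : ∑ v, G.degree v = 2 * (Fintype.card V - 1) := by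
    rw [SimpleGraph.sum_degrees_eq_twice_card_edges]
    have := htree.card_edgeFinset
    omega
  have hsumf : ∑ v, f v = 2 * ((Fintype.card V : ℝ) - 1) := by
    simp only [hf]
    rw [← Nat.cast_sum, hE]
    rw [Nat.cast_mul, Nat.cast_sub (by omega : 1 ≤ Fintype.card V)]
    norm_num
  have hmemα : (α:ℝ) ∈ mainSpectrum G := by
    refine ⟨f, hAf, ?_⟩
    rw [hsumf]
    intro h
    nlinarith
  have hmem0 : (0:ℝ) ∈ mainSpectrum G := by
    refine ⟨fun v => f v - α, ?_, ?_⟩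
    · have hx : (fun v => f v - (α:ℝ)) = f - (α:ℝ) • (fun _ => (1:ℝ)) := by
        funext v; simp
      rw [hx, Matrix.mulVec_sub, Matrix.mulVec_smul, hA1, hAf]
      funext v; simp
    · have : ∑ v : V, (f v - (α:ℝ)) = (∑ v, f v) - Fintype.card V * α := by
        rw [Finset.sum_sub_distrib, Finset.sum_const, Finset.card_univ, nsmul_eq_mul]
      rw [this, hsumf]
      intro h
      nlinarith
  have hub : ∀ lam ∈ mainSpectrum G, lam = 0 ∨ lam = (α:ℝ) := by
    rintro lam ⟨x, hx, hs⟩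
    have e1 : f ⬝ᵥ x = lam * ∑ v, x v := by
      calc f ⬝ᵥ x = (adjMat G).mulVec (fun _ => (1:ℝ)) ⬝ᵥ x := by rw [hA1]
        _ = (fun _ : V => (1:ℝ)) ⬝ᵥ (adjMat G).mulVec x := adjMat_symm_dot G _ x
        _ = (fun _ : V => (1:ℝ)) ⬝ᵥ (lam • x) := by rw [hx]
        _ = lam * ∑ v, x v := by simp [dotProduct, Finset.mul_sum]
    have e2 : (α:ℝ) * (f ⬝ᵥ x) = lam * (f ⬝ᵥ x) := by
      calc (α:ℝ) * (f ⬝ᵥ x) = ((α:ℝ) • f) ⬝ᵥ x := by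
            rw [smul_dotProduct, smul_eq_mul]
        _ = (adjMat G).mulVec f ⬝ᵥ x := by rw [hAf]
        _ = f ⬝ᵥ (adjMat G).mulVec x := adjMat_symm_dot G f x
        _ = f ⬝ᵥ (lam • x) := by rw [hx]
        _ = lam * (f ⬝ᵥ x) := by
            rw [dotProduct_smul, smul_eq_mul]
    have h3 : lam * (lam - α) * (∑ v, x v) = 0 := by
      linear_combination ((α:ℝ) - lam) * e1 - e2
    rcases mul_eq_zero.mp h3 with h | h
    · rcases mul_eq_zero.mp h with h | h
      · exact Or.inl h
      · exact Or.inr (by linarith)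
    · exact absurd h hs
  have hne : (0:ℝ) ≠ (α:ℝ) := by
    have : (0:ℕ) ≠ α := by omega
    exact_mod_cast this
  have hset : mainSpectrum G = {0, (α:ℝ)} := by
    apply Set.eq_of_subset_of_subset
    · intro lam hl
      rcases hub lam hl with h | h <;> simp [h]
    · intro lam hl
      rcases hl with h | h
      · exact h ▸ hmem0
      · exact (by simpa using h : lam = (α:ℝ)) ▸ hmemα
  constructor
  · rw [hset]
    exact (Set.finite_singleton _).insert 0
  · rw [hset, Set.ncard_pair hne]
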